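/- Let M be a compact manifold and G a Lie group acting smoothly on M. Let X, Y ∈ 𝔤 and k ≥ 1 be such that Z := ad(X)^k Y is centralized by X (i.e. [X,Z] = 0). If the vector field induced by Y on M vanishes at some point, then the vector field induced by Z vanishes at some point. -/

import Mathlib

noncomputable section

open Manifold Set

variable {E : Type*} [NormedAddCommGroup E] [NormedSpace ℝ E] [FiniteDimensional ℝ E]
variable {M : Type*} [TopologicalSpace M] [ChartedSpace E M]
  [IsManifold 𝓘(ℝ, E) (⊤ : ℕ∞) M]

/-- A symmetric bilinear form of Lorentzian signature `(1, dim E - 1)`: there is a timelike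
vector whose orthogonal complement is positive definite (timelike-negative convention). -/
def IsLorentzForm (b : E →L[ℝ] E →L[ℝ] ℝ) : Prop :=
  (∀ v w, b v w = b w v) ∧ ∃ v, b v v < 0 ∧ ∀ w, b v w = 0 → w ≠ 0 → 0 < b w w

/-- A pseudo-Riemannian metric: a smooth field of symmetric nondegenerate bilinear forms on
the tangent spaces. -/
def IsPseudoMetric (g : M → E →L[ℝ] E →L[ℝ] ℝ) : Prop :=
  ContMDiff 𝓘(ℝ, E) 𝓘(ℝ, E →L[ℝ] E →L[ℝ] ℝ) (⊤ : ℕ∞) g ∧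
    ∀ x : M, (∀ v w, g x v w = g x w v) ∧ ∀ v, (∀ w, g x v w = 0) → v = 0

/-- A Lorentzian metric: a smooth field of Lorentzian bilinear forms on the tangent spaces. -/
def IsLorentzMetric (g : M → E →L[ℝ] E →L[ℝ] ℝ) : Prop :=
  ContMDiff 𝓘(ℝ, E) 𝓘(ℝ, E →L[ℝ] E →L[ℝ] ℝ) (⊤ : ℕ∞) g ∧ ∀ x : M, IsLorentzForm (g x)

/-- A map `f : M → M` is conformal with respect to `g`: it is smooth and pulls back `g` to a
positive multiple of `g`. -/
def ConformalTo (g : M → E →L[ℝ] E →L[ℝ] ℝ) (f : M → M) : Prop :=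
  ContMDiff 𝓘(ℝ, E) 𝓘(ℝ, E) (⊤ : ℕ∞) f ∧ ∃ c : M → ℝ, (∀ x, 0 < c x) ∧
    ∀ (x : M) (v w : TangentSpace 𝓘(ℝ, E) x),
      g (f x) (mfderiv 𝓘(ℝ, E) 𝓘(ℝ, E) f x v) (mfderiv 𝓘(ℝ, E) 𝓘(ℝ, E) f x w)
        = c x * g x v w

/-- A map `f : M → M` is an isometry with respect to `g`: it is smooth and pulls back `g`
to `g`. -/
def IsometryTo (g : M → E →L[ℝ] E →L[ℝ] ℝ) (f : M → M) : Prop :=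
  ContMDiff 𝓘(ℝ, E) 𝓘(ℝ, E) (⊤ : ℕ∞) f ∧
    ∀ (x : M) (v w : TangentSpace 𝓘(ℝ, E) x),
      g (f x) (mfderiv 𝓘(ℝ, E) 𝓘(ℝ, E) f x v) (mfderiv 𝓘(ℝ, E) 𝓘(ℝ, E) f x w)
        = g x v w

/-- `φ : ℝ → M → M` is a one-parameter group of transformations. -/
def IsFlow (φ : ℝ → M → M) : Prop :=
  (∀ x : M, φ 0 x = x) ∧ ∀ (s t : ℝ) (x : M), φ (s + t) x = φ s (φ t x)

/-- The flow `φ` is generated by the vector field `X`: for every `x` the curve `t ↦ φ t x`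
has velocity `X (φ t x)`. -/
def FlowGenerates (φ : ℝ → M → M) (X : (x : M) → TangentSpace 𝓘(ℝ, E) x) : Prop :=
  ∀ (x : M) (t : ℝ), HasMFDerivAt 𝓘(ℝ, ℝ) 𝓘(ℝ, E) (fun s => φ s x) t
    ((ContinuousLinearMap.id ℝ ℝ).smulRight (X (φ t x)))

/-- A conformal vector field: a (complete) vector field whose flow consists of conformal
transformations of `(M, g)`. -/
def IsConformalField (g : M → E →L[ℝ] E →L[ℝ] ℝ)
    (X : (x : M) → TangentSpace 𝓘(ℝ, E) x) : Prop :=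
  ∃ φ : ℝ → M → M, IsFlow φ ∧ FlowGenerates φ X ∧ ∀ t : ℝ, ConformalTo g (φ t)

/-- A Killing vector field: a (complete) vector field whose flow consists of isometries of
`(M, g)`. -/
def IsKillingField (g : M → E →L[ℝ] E →L[ℝ] ℝ)
    (X : (x : M) → TangentSpace 𝓘(ℝ, E) x) : Prop :=
  ∃ φ : ℝ → M → M, IsFlow φ ∧ FlowGenerates φ X ∧ ∀ t : ℝ, IsometryTo g (φ t)

attribute [local instance 100] LieRing.ofAssociativeRing

open NormedSpace in
theorem exp_conj_eq_sum_aux {d : ℕ} (X : Matrix (Fin d) (Fin d) ℝ)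
    (c : ℕ → Matrix (Fin d) (Fin d) ℝ) (k : ℕ)
    (hc : ∀ n, c (n + 1) = X * c n - c n * X) (hck : c (k + 1) = 0) (t : ℝ) :
    exp (t • X) * c 0 * exp (-(t • X)) =
      ∑ n ∈ Finset.range (k + 1), (t ^ n / n.factorial) • c n := by
  letI : SeminormedRing (Matrix (Fin d) (Fin d) ℝ) := Matrix.linftyOpSemiNormedRing
  letI : NormedRing (Matrix (Fin d) (Fin d) ℝ) := Matrix.linftyOpNormedRing
  letI : NormedAlgebra ℝ (Matrix (Fin d) (Fin d) ℝ) := Matrix.linftyOpNormedAlgebra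
  set P : ℝ → Matrix (Fin d) (Fin d) ℝ :=
    fun t => ∑ n ∈ Finset.range (k + 1), (t ^ n / n.factorial) • c n with hPdef
  have hP' : ∀ s : ℝ, HasDerivAt P (X * P s - P s * X) s := by
    intro s
    have h1 : HasDerivAt P
        (∑ n ∈ Finset.range (k + 1), ((n * s ^ (n - 1)) / n.factorial) • c n) s := by
      apply HasDerivAt.fun_sum
      intro n _
      have : HasDerivAt (fun t : ℝ => t ^ n / n.factorial) (n * s ^ (n - 1) / n.factorial) s :=
        (hasDerivAt_pow n s).div_const _
      exact this.smul_const (c n)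
    convert h1 using 1
    have hR : X * P s - P s * X
        = ∑ n ∈ Finset.range (k + 1), (s ^ n / n.factorial) • c (n + 1) := by
      rw [hPdef]
      simp only [Finset.mul_sum, Finset.sum_mul, ← Finset.sum_sub_distrib]
      refine Finset.sum_congr rfl fun n _ => ?_
      rw [hc n, mul_smul_comm, smul_mul_assoc, smul_sub]
    rw [hR]
    rw [Finset.sum_range_succ, hck, smul_zero, add_zero]
    rw [Finset.sum_range_succ']
    simp only [Nat.cast_zero, zero_mul, zero_div, zero_smul, add_zero]
    refine (Finset.sum_congr rfl fun n _ => ?_).symm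
    congr 1
    rw [Nat.factorial_succ, Nat.add_sub_cancel]
    push_cast
    field_simp
  set F : ℝ → Matrix (Fin d) (Fin d) ℝ := fun t => exp (t • (-X)) * P t * exp (t • X)
    with hFdef
  have hF' : ∀ s : ℝ, HasDerivAt F 0 s := by
    intro s
    have h1 : HasDerivAt (fun t : ℝ => exp (t • (-X))) (exp (s • (-X)) * (-X)) s :=
      hasDerivAt_exp_smul_const (-X) s
    have h2 : HasDerivAt (fun t : ℝ => exp (t • X)) (exp (s • X) * X) s :=
      hasDerivAt_exp_smul_const X s
    have h3 : HasDerivAt (fun t : ℝ => exp (t • X)) (X * exp (s • X)) s :=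
      hasDerivAt_exp_smul_const' X s
    have := ((h1.mul (hP' s)).mul h3)
    convert this using 1
    iterate 4 rfl
    simp only [Pi.mul_apply]
    set e1 := exp (s • (-X)); set e2 := exp (s • X)
    noncomm_ring
  have hconst : ∀ s : ℝ, F s = F 0 := fun s =>
    is_const_of_deriv_eq_zero (fun u => (hF' u).differentiableAt)
      (fun u => (hF' u).deriv) s 0
  have hF0 : F 0 = c 0 := by
    simp only [hFdef, zero_smul, NormedSpace.exp_zero, one_mul, mul_one, hPdef]
    rw [Finset.sum_range_succ']
    simp
  have hunit : exp (t • X) * exp (t • (-X)) = 1 := by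
    rw [← Matrix.exp_add_of_commute, smul_neg, add_neg_cancel, NormedSpace.exp_zero]
    exact Commute.smul_left (Commute.smul_right (Commute.neg_right rfl) t) t
  have hunit' : exp (t • (-X)) * exp (t • X) = 1 := by
    rw [← Matrix.exp_add_of_commute, smul_neg, neg_add_cancel, NormedSpace.exp_zero]
    exact Commute.smul_left (Commute.smul_right (Commute.neg_left rfl) t) t
  have key : exp (t • (-X)) * P t * exp (t • X) = c 0 := by rw [← hF0]; exact hconst t
  have : exp (t • X) * (exp (t • (-X)) * P t * exp (t • X)) * exp (t • (-X)) = P t := by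
    rw [mul_assoc, mul_assoc, hunit, mul_one, ← mul_assoc, hunit, one_mul]
  rw [show -(t • X) = t • (-X) from (smul_neg t X).symm, ← key]
  exact this

open NormedSpace in
/-- Let `M` be a compact manifold on which a Lie group acts smoothly, with
(linear, by Ado's theorem) Lie algebra `𝔤`: each `A ∈ 𝔤` induces a complete vector field
`v A` on `M` with flow `φ A`, depending linearly on `A` and satisfying the adjoint
equivariance `(φ A t)_* (v B) = v (Ad(exp tA) B)`.  Let `X, Y ∈ 𝔤` and `k ≥ 1` be such that
`Z := ad(X)^k Y` is centralized by `X`.  If the vector field `v Y` vanishes at some point of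
`M`, then so does `v Z`. -/
theorem induced_field_vanishes_of_iterated_bracket [CompactSpace M] (d : ℕ)
    (𝔤 : LieSubalgebra ℝ (Matrix (Fin d) (Fin d) ℝ))
    (v : 𝔤 → (x : M) → TangentSpace 𝓘(ℝ, E) x)
    (hlin : ∀ (a : ℝ) (A B : 𝔤) (x : M), v (a • A + B) x = a • v A x + v B x)
    (hcont : ∀ A : 𝔤, Continuous (fun x => v A x : M → E))
    (φ : 𝔤 → ℝ → M → M)
    (hflow : ∀ A : 𝔤, IsFlow (φ A) ∧ FlowGenerates (φ A) (v A))
    (hsmooth : ∀ (A : 𝔤) (t : ℝ), ContMDiff 𝓘(ℝ, E) 𝓘(ℝ, E) (⊤ : ℕ∞) (φ A t))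
    (hequiv : ∀ (A B C : 𝔤) (t : ℝ) (x : M),
      (C : Matrix (Fin d) (Fin d) ℝ) =
        exp (t • (A : Matrix (Fin d) (Fin d) ℝ)) * B *
          exp (-(t • (A : Matrix (Fin d) (Fin d) ℝ))) →
      mfderiv 𝓘(ℝ, E) 𝓘(ℝ, E) (φ A t) x (v B x) = v C (φ A t x))
    (X Y Z : 𝔤) (k : ℕ) (hk : 1 ≤ k)
    (hZ : Z = ((LieAlgebra.ad ℝ 𝔤 X) ^ k) Y) (hcent : ⁅X, Z⁆ = 0)
    (hY0 : ∃ x : M, v Y x = 0) :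
    ∃ x : M, v Z x = 0 := by
  obtain ⟨x₀, hx₀⟩ := hY0
  -- linearity consequences
  have hv0 : ∀ x : M, v 0 x = 0 := by
    intro x
    have h := hlin 1 0 0 x
    simp only [one_smul, add_zero] at h
    exact (left_eq_add.mp h)
  have hvadd : ∀ (A B : 𝔤) (x : M), v (A + B) x = v A x + v B x := by
    intro A B x
    have h := hlin 1 A B x
    simpa using h
  have hvsmul : ∀ (a : ℝ) (A : 𝔤) (x : M), v (a • A) x = a • v A x := by
    intro a A x
    have h := hlin a A 0 x
    simpa [hv0] using h
  have hvsum : ∀ (s : Finset ℕ) (a : ℕ → ℝ) (c : ℕ → 𝔤) (x : M),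
      v (∑ n ∈ s, a n • c n) x = ∑ n ∈ s, a n • v (c n) x := by
    intro s a c x
    classical
    induction s using Finset.induction with
    | empty => simpa using hv0 x
    | insert _ _ h ih =>
      rw [Finset.sum_insert h, Finset.sum_insert h, hvadd, hvsmul, ih]
  -- the iterated brackets
  set c : ℕ → 𝔤 := fun n => ((LieAlgebra.ad ℝ 𝔤 X) ^ n) Y with hcdef
  have hc0 : c 0 = Y := by simp [hcdef]
  have hcsucc : ∀ n, c (n + 1) = ⁅X, c n⁆ := by
    intro n
    simp [hcdef, pow_succ', Module.End.mul_apply, LieAlgebra.ad_apply]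
  have hck : c k = Z := hZ.symm
  have hck1 : c (k + 1) = 0 := by rw [hcsucc, hck, hcent]
  -- matrix versions
  have hcm : ∀ n, ((c (n + 1) : 𝔤) : Matrix (Fin d) (Fin d) ℝ) =
      (X : Matrix (Fin d) (Fin d) ℝ) * (c n : Matrix (Fin d) (Fin d) ℝ)
        - (c n : Matrix (Fin d) (Fin d) ℝ) * (X : Matrix (Fin d) (Fin d) ℝ) := by
    intro n
    rw [hcsucc]
    rw [LieSubalgebra.coe_bracket, Ring.lie_def]
  have hcm1 : ((c (k + 1) : 𝔤) : Matrix (Fin d) (Fin d) ℝ) = 0 := by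
    rw [hck1]; rfl
  -- the curve
  set y : ℝ → M := fun t => φ X t x₀ with hydef
  -- key vanishing identity
  have hvanish : ∀ t : ℝ,
      (∑ n ∈ Finset.range (k + 1), (t ^ n / n.factorial) • v (c n) (y t)) = 0 := by
    intro t
    have hCmat : ((∑ n ∈ Finset.range (k + 1), (t ^ n / n.factorial) • c n : 𝔤) :
        Matrix (Fin d) (Fin d) ℝ) =
        exp (t • (X : Matrix (Fin d) (Fin d) ℝ)) * (Y : Matrix (Fin d) (Fin d) ℝ) *
          exp (-(t • (X : Matrix (Fin d) (Fin d) ℝ))) := by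
      have hcoe : ((∑ n ∈ Finset.range (k + 1), (t ^ n / n.factorial) • c n : 𝔤) :
          Matrix (Fin d) (Fin d) ℝ) =
          ∑ n ∈ Finset.range (k + 1), (t ^ n / n.factorial) •
            ((c n : 𝔤) : Matrix (Fin d) (Fin d) ℝ) := by
        push_cast
        rfl
      rw [hcoe]
      have := exp_conj_eq_sum_aux (X : Matrix (Fin d) (Fin d) ℝ)
        (fun n => ((c n : 𝔤) : Matrix (Fin d) (Fin d) ℝ)) k hcm hcm1 t
      rw [← this, hc0]
    have h := hequiv X Y (∑ n ∈ Finset.range (k + 1), (t ^ n / n.factorial) • c n) t x₀ hCmat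
    rw [hx₀, ContinuousLinearMap.map_zero] at h
    rw [hvsum] at h
    exact h.symm
  -- bounds
  set w : ℕ → M → E := fun n x => v (c n) x with hwdef
  set u : M → E := fun x => v Z x with hudef
  have hbd : ∀ n : ℕ, ∃ B : ℝ, ∀ x : M, ‖w n x‖ ≤ B := by
    intro n
    obtain ⟨x, -, hx⟩ := isCompact_univ.exists_isMaxOn ⟨x₀, mem_univ _⟩
      ((continuous_norm.comp (hcont (c n))).continuousOn : ContinuousOn (fun z => ‖w n z‖) univ)
    exact ⟨_, fun z => hx (mem_univ z)⟩
  choose B hB using hbd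
  set S : ℝ := ∑ n ∈ Finset.range k, B n / n.factorial with hSdef
  set K : ℝ := (k.factorial : ℝ) * S with hKdef
  -- tendsto zero
  have htend : Filter.Tendsto (fun t => u (y t)) Filter.atTop (nhds 0) := by
    apply squeeze_zero_norm' (a := fun t : ℝ => K / t)
    · filter_upwards [Filter.eventually_ge_atTop (1 : ℝ)] with t ht
      have ht0 : (0 : ℝ) < t := lt_of_lt_of_le one_pos ht
      have h := hvanish t
      rw [Finset.sum_range_succ, hck] at h
      have h2 : (t ^ k / k.factorial) • u (y t) =
          -∑ n ∈ Finset.range k, (t ^ n / n.factorial) • w n (y t) := by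
        rw [eq_neg_iff_add_eq_zero, add_comm]
        exact h
      have h3 : (t ^ k / k.factorial) * ‖u (y t)‖ ≤ t ^ (k - 1) * S := by
        calc (t ^ k / k.factorial) * ‖u (y t)‖
            = ‖(t ^ k / k.factorial) • u (y t)‖ := by
              rw [norm_smul, Real.norm_eq_abs, abs_of_nonneg (by positivity)]
          _ = ‖∑ n ∈ Finset.range k, (t ^ n / n.factorial) • w n (y t)‖ := by
              rw [h2, norm_neg]
          _ ≤ ∑ n ∈ Finset.range k, ‖(t ^ n / n.factorial) • w n (y t)‖ :=
              norm_sum_le _ _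
          _ ≤ ∑ n ∈ Finset.range k, t ^ (k - 1) * (B n / n.factorial) := by
              apply Finset.sum_le_sum
              intro n hn
              rw [norm_smul, Real.norm_eq_abs, abs_of_nonneg (by positivity)]
              have htn : t ^ n ≤ t ^ (k - 1) :=
                pow_le_pow_right₀ ht (Nat.le_sub_one_of_lt (Finset.mem_range.mp hn))
              have hBn : ‖w n (y t)‖ ≤ B n := hB n (y t)
              calc t ^ n / n.factorial * ‖w n (y t)‖
                  ≤ t ^ (k - 1) / n.factorial * B n := by
                    apply mul_le_mul _ hBn (norm_nonneg _) (by positivity)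
                    exact div_le_div_of_nonneg_right htn (by positivity) |>.trans_eq rfl
                _ = t ^ (k - 1) * (B n / n.factorial) := by ring
          _ = t ^ (k - 1) * S := by rw [hSdef, Finset.mul_sum]
      -- now divide
      have hfac : (0 : ℝ) < k.factorial := by positivity
      have htk : (0 : ℝ) < t ^ k := by positivity
      have hkk : t ^ k = t ^ (k - 1) * t := by
        conv_lhs => rw [show k = (k - 1) + 1 from (Nat.succ_pred_eq_of_pos hk).symm]
        rw [pow_succ]
      rw [div_mul_eq_mul_div, div_le_iff₀ hfac] at h3
      -- h3 : t^k * ‖u‖ ≤ t^(k-1) * S * k!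
      rw [hKdef, le_div_iff₀ ht0]
      -- goal : ‖u‖ * t ≤ k! * S
      have h4 : t ^ (k - 1) * (‖u (y t)‖ * t) ≤ t ^ (k - 1) * ((k.factorial : ℝ) * S) := by
        calc t ^ (k - 1) * (‖u (y t)‖ * t) = t ^ k * ‖u (y t)‖ := by rw [hkk]; ring
          _ ≤ t ^ (k - 1) * S * k.factorial := h3
          _ = t ^ (k - 1) * ((k.factorial : ℝ) * S) := by ring
      exact le_of_mul_le_mul_left h4 (pow_pos ht0 (k - 1))
    · exact Filter.Tendsto.div_atTop tendsto_const_nhds Filter.tendsto_id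
  -- cluster point
  obtain ⟨p, hp⟩ := exists_clusterPt_of_compactSpace (Filter.map y Filter.atTop)
  refine ⟨p, ?_⟩
  have hucont : Continuous u := hcont Z
  have hcp : ClusterPt (u p) (nhds 0) :=
    hp.map hucont.continuousAt (by rwa [Filter.tendsto_map'_iff])
  exact eq_of_nhds_neBot (X := E) hcp
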